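/- A matrix N ∈ M_{mp×nq} admits a Kronecker product decomposition N = A ⊗ B with A ∈ M_{m×n} and B ∈ M_{p×q} if and only if the vector Ψ^T V_c(N) ∈ ℝ^{mnpq} is Kronecker-decomposable as u ⊗ v with u ∈ ℝ^{mn} and v ∈ ℝ^{pq}, where Ψ = I_n ⊗ W_{[m,q]} ⊗ I_p. -/

import Mathlib

open Matrix

/-- Row/left component of a lexicographic index in `Fin (a*b)`. -/
def fdiv {a b : ℕ} (k : Fin (a * b)) : Fin a :=
  ⟨(k : ℕ) / b, Nat.div_lt_of_lt_mul (Nat.mul_comm a b ▸ k.isLt)⟩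

/-- Right component of a lexicographic index in `Fin (a*b)`. -/
def fmod {a b : ℕ} (k : Fin (a * b)) : Fin b :=
  ⟨(k : ℕ) % b, Nat.mod_lt _ (Nat.pos_of_ne_zero (by rintro rfl; exact absurd k.isLt (by simp)))⟩

/-- Kronecker product of column vectors (lexicographic order of indices). -/
def vKron {m n : ℕ} (x : Fin m → ℝ) (y : Fin n → ℝ) : Fin (m * n) → ℝ :=
  fun k => x (fdiv k) * y (fmod k)

/-- Kronecker product of matrices, with `Fin`-indexed dimensions. -/
def mKron {m n p q : ℕ} (A : Matrix (Fin m) (Fin n) ℝ) (B : Matrix (Fin p) (Fin q) ℝ) :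
    Matrix (Fin (m * p)) (Fin (n * q)) ℝ :=
  fun i j => A (fdiv i) (fdiv j) * B (fmod i) (fmod j)

/-- Semi-tensor product of matrices: A ⋉ B = (A ⊗ I_{t/n})(B ⊗ I_{t/p}), t = lcm n p. -/
def stp {m n p q : ℕ} (A : Matrix (Fin m) (Fin n) ℝ) (B : Matrix (Fin p) (Fin q) ℝ) :
    Matrix (Fin (m * (Nat.lcm n p / n))) (Fin (q * (Nat.lcm n p / p))) ℝ :=
  mKron A (1 : Matrix (Fin (Nat.lcm n p / n)) (Fin (Nat.lcm n p / n)) ℝ) *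
    (Matrix.reindex (finCongr (by
        rw [Nat.mul_div_cancel' (Nat.dvd_lcm_right n p),
          Nat.mul_div_cancel' (Nat.dvd_lcm_left n p)])) (Equiv.refl _)
      (mKron B (1 : Matrix (Fin (Nat.lcm n p / p)) (Fin (Nat.lcm n p / p)) ℝ)))

/-- The swap matrix W_{[m,n]}: sends x ⊗ y to y ⊗ x. -/
def swapM (m n : ℕ) : Matrix (Fin (n * m)) (Fin (m * n)) ℝ :=
  fun i j => if (i : ℕ) = (fmod j : ℕ) * m + (fdiv j : ℕ) then 1 else 0

/-- Column-stacking vectorization of a matrix. -/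
def vecc {m n : ℕ} (A : Matrix (Fin m) (Fin n) ℝ) : Fin (n * m) → ℝ :=
  fun k => A (fmod k) (fdiv k)

/-- Iterated Kronecker product of column vectors. -/
def kronD : (d : ℕ) → (n : Fin d → ℕ) → ((i : Fin d) → Fin (n i) → ℝ) → Fin (∏ i, n i) → ℝ
  | 0, _, _ => fun _ => 1
  | d + 1, n, x => fun k =>
      vKron (x 0) (kronD d (fun i => n i.succ) (fun i => x i.succ))
        (Fin.cast (by rw [Fin.prod_univ_succ]) k)

/-- Lexicographic encoding of a multi-index into a single natural number. -/
def encode : (d : ℕ) → (n : Fin d → ℕ) → ((i : Fin d) → Fin (n i)) → ℕ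
  | 0, _, _ => 0
  | d + 1, n, f =>
      (f 0 : ℕ) * (∏ i : Fin d, n i.succ) + encode d (fun i => n i.succ) (fun i => f i.succ)

theorem encode_lt : ∀ (d : ℕ) (n : Fin d → ℕ) (f : (i : Fin d) → Fin (n i)),
    encode d n f < ∏ i, n i := by
  intro d
  induction d with
  | zero => intro n f; simp [encode]
  | succ d ih =>
    intro n f
    rw [Fin.prod_univ_succ]
    have h1 := ih (fun i => n i.succ) (fun i => f i.succ)
    have h2 := (f 0).isLt
    calc (f 0 : ℕ) * (∏ i : Fin d, n i.succ)
        + encode d (fun i => n i.succ) (fun i => f i.succ)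
        < (f 0 : ℕ) * (∏ i : Fin d, n i.succ) + (∏ i : Fin d, n i.succ) :=
          Nat.add_lt_add_left h1 _
      _ = ((f 0 : ℕ) + 1) * (∏ i : Fin d, n i.succ) := by ring
      _ ≤ n 0 * (∏ i : Fin d, n i.succ) := Nat.mul_le_mul_right _ h2

/-- The MDA projection map Ξ_i determined by the head multi-index e. -/
def proj (d : ℕ) (n : Fin d → ℕ) (e : (i : Fin d) → Fin (n i)) (i : Fin d)
    (x : Fin (∏ j, n j) → ℝ) : Fin (n i) → ℝ :=
  fun k => x ⟨encode d n (Function.update e i k), encode_lt d n _⟩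

/-- A vector is monic if its first nonzero entry equals 1. -/
def Monic {N : ℕ} (v : Fin N → ℝ) : Prop :=
  ∃ e : Fin N, v e = 1 ∧ ∀ j : Fin N, j < e → v j = 0

/- ===== auxiliary material for STATEMENT 17 ===== -/

lemma pair_lt {a b x y : ℕ} (hx : x < a) (hy : y < b) : x * b + y < a * b :=
  calc x * b + y < x * b + b := Nat.add_lt_add_left hy _
    _ = (x + 1) * b := by ring
    _ ≤ a * b := Nat.mul_le_mul_right _ hx

/-- Pairing of indices, inverse to `fdiv`/`fmod`. -/
def fpair {a b : ℕ} (x : Fin a) (y : Fin b) : Fin (a * b) :=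
  ⟨(x : ℕ) * b + (y : ℕ), pair_lt x.isLt y.isLt⟩

@[simp] lemma val_fpair {a b : ℕ} (x : Fin a) (y : Fin b) :
    ((fpair x y : Fin (a * b)) : ℕ) = (x : ℕ) * b + (y : ℕ) := rfl

lemma nat_pair_div {b x y : ℕ} (hy : y < b) : (x * b + y) / b = x := by
  rw [Nat.mul_comm, Nat.mul_add_div (by omega), Nat.div_eq_of_lt hy, Nat.add_zero]

lemma nat_pair_mod {b x y : ℕ} (hy : y < b) : (x * b + y) % b = y := by
  rw [Nat.mul_comm x b, Nat.mul_add_mod, Nat.mod_eq_of_lt hy]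

@[simp] lemma fdiv_fpair {a b : ℕ} (x : Fin a) (y : Fin b) : fdiv (fpair x y) = x :=
  Fin.ext (by simpa [fdiv, fpair] using nat_pair_div y.isLt)

@[simp] lemma fmod_fpair {a b : ℕ} (x : Fin a) (y : Fin b) : fmod (fpair x y) = y :=
  Fin.ext (by simpa [fmod, fpair] using nat_pair_mod (x := (x : ℕ)) y.isLt)

lemma fpair_fdiv_fmod {a b : ℕ} (k : Fin (a * b)) : fpair (fdiv k) (fmod k) = k :=
  Fin.ext (by simp [fpair, fdiv, fmod, Nat.div_add_mod'])

lemma nat_regroup {β γ δ : ℕ} (hβ : 0 < β) (hγ : 0 < γ) (hδ : 0 < δ) (K : ℕ) :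
    K / (γ * δ) = K / ((β * γ) * δ) * β + K % ((β * γ) * δ) / δ / γ ∧
    K % (γ * δ) = (K % ((β * γ) * δ) / δ % γ) * δ + K % ((β * γ) * δ) % δ := by
  have key : ∀ a r e f g h2 : ℕ, K = a * ((β * γ) * δ) + r → r = e * δ + f →
      e = g * γ + h2 → K = (a * β + g) * (γ * δ) + (h2 * δ + f) := by
    intro a r e f g h2 h1' h2' h3'
    subst h1'; subst h2'; subst h3'; ring
  have hk : K = (K / ((β * γ) * δ) * β + K % ((β * γ) * δ) / δ / γ) * (γ * δ) +
      ((K % ((β * γ) * δ) / δ % γ) * δ + K % ((β * γ) * δ) % δ) :=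
    key _ _ _ _ _ _ (Nat.div_add_mod' K _).symm (Nat.div_add_mod' _ δ).symm
      (Nat.div_add_mod' _ γ).symm
  have hY : (K % ((β * γ) * δ) / δ % γ) * δ + K % ((β * γ) * δ) % δ < γ * δ :=
    pair_lt (Nat.mod_lt _ hγ) (Nat.mod_lt _ hδ)
  constructor
  · conv_lhs => rw [hk]
    exact nat_pair_div hY
  · conv_lhs => rw [hk]
    exact nat_pair_mod hY

lemma fin_pos_factors {α β γ δ : ℕ} (j : Fin (α * ((β * γ) * δ))) :
    0 < β ∧ 0 < γ ∧ 0 < δ := by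
  have htot : 0 < α * ((β * γ) * δ) := j.pos
  have hβ : β ≠ 0 := by rintro rfl; simp at htot
  have hγ : γ ≠ 0 := by rintro rfl; simp at htot
  have hδ : δ ≠ 0 := by rintro rfl; simp at htot
  omega

lemma fdiv_cast {α β γ δ : ℕ} (h : α * ((β * γ) * δ) = (α * β) * (γ * δ))
    (j : Fin (α * ((β * γ) * δ))) :
    fdiv (Fin.cast h j) = fpair (fdiv j) (fdiv (fdiv (fmod j))) := by
  obtain ⟨hβ, hγ, hδ⟩ := fin_pos_factors j
  apply Fin.ext
  simpa [fdiv, fmod, fpair, Fin.coe_cast] using (nat_regroup hβ hγ hδ (j : ℕ)).1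

lemma fmod_cast {α β γ δ : ℕ} (h : α * ((β * γ) * δ) = (α * β) * (γ * δ))
    (j : Fin (α * ((β * γ) * δ))) :
    fmod (Fin.cast h j) = fpair (fmod (fdiv (fmod j))) (fmod (fmod j)) := by
  obtain ⟨hβ, hγ, hδ⟩ := fin_pos_factors j
  apply Fin.ext
  simpa [fdiv, fmod, fpair, Fin.coe_cast] using (nat_regroup hβ hγ hδ (j : ℕ)).2

/-- The permuted index selected by the matrix Ψ = I_n ⊗ W_{[m,q]} ⊗ I_p. -/
def sK (m n p q : ℕ) (k : Fin (n * ((m * q) * p))) : Fin (n * ((q * m) * p)) :=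
  fpair (fdiv k) (fpair (fpair (fmod (fdiv (fmod k))) (fdiv (fdiv (fmod k)))) (fmod (fmod k)))

lemma psi_apply (m n p q : ℕ) (i : Fin (n * ((q * m) * p))) (k : Fin (n * ((m * q) * p))) :
    mKron (1 : Matrix (Fin n) (Fin n) ℝ)
        (mKron (swapM m q) (1 : Matrix (Fin p) (Fin p) ℝ)) i k
      = if i = sK m n p q k then 1 else 0 := by
  by_cases h : i = sK m n p q k
  · subst h
    unfold mKron sK swapM
    simp [fdiv_fpair, fmod_fpair, Matrix.one_apply, val_fpair]
  · rw [if_neg h]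
    simp only [mKron, swapM, Matrix.one_apply]
    split_ifs with h1 h2 h3 <;> try ring
    exfalso
    apply h
    have h2' : fdiv (fmod i) = fpair (fmod (fdiv (fmod k))) (fdiv (fdiv (fmod k))) :=
      Fin.ext (by simpa [fpair] using h2)
    have e1 := fpair_fdiv_fmod i
    have e2 := fpair_fdiv_fmod (fmod i)
    conv_lhs => rw [← e1, ← e2]
    rw [h1, h2', h3]
    rfl

lemma lhs_eval (m n p q : ℕ) (N : Matrix (Fin (m * p)) (Fin (n * q)) ℝ)
    (hc : n * ((q * m) * p) = (n * q) * (m * p)) (k : Fin (n * ((m * q) * p))) :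
    ((mKron (1 : Matrix (Fin n) (Fin n) ℝ)
          (mKron (swapM m q) (1 : Matrix (Fin p) (Fin p) ℝ)))ᵀ
        *ᵥ (fun j => vecc N (Fin.cast hc j))) k
      = N (fpair (fdiv (fdiv (fmod k))) (fmod (fmod k)))
          (fpair (fdiv k) (fmod (fdiv (fmod k)))) := by
  simp only [Matrix.mulVec, dotProduct, Matrix.transpose_apply, psi_apply, ite_mul,
    one_mul, zero_mul, Finset.sum_ite_eq', Finset.mem_univ, if_true]
  rw [show vecc N (Fin.cast hc (sK m n p q k))
      = N (fmod (Fin.cast hc (sK m n p q k))) (fdiv (Fin.cast hc (sK m n p q k))) from rfl]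
  rw [fdiv_cast hc, fmod_cast hc]
  simp [sK, fdiv_fpair, fmod_fpair]

/-- N ∈ M_{mp×nq} admits a KPD N = A ⊗ B, A ∈ M_{m×n}, B ∈ M_{p×q},
iff Ψᵀ V_c(N) is Kronecker-decomposable as u ⊗ v with u ∈ ℝ^{mn}, v ∈ ℝ^{pq},
where Ψ = I_n ⊗ W_{[m,q]} ⊗ I_p. -/
theorem matrix_kpd_iff_vector_kpd (m n p q : ℕ) (N : Matrix (Fin (m * p)) (Fin (n * q)) ℝ) :
    (∃ (A : Matrix (Fin m) (Fin n) ℝ) (B : Matrix (Fin p) (Fin q) ℝ), N = mKron A B) ↔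
    (∃ (u : Fin (n * m) → ℝ) (v : Fin (q * p) → ℝ),
      (mKron (1 : Matrix (Fin n) (Fin n) ℝ)
          (mKron (swapM m q) (1 : Matrix (Fin p) (Fin p) ℝ)))ᵀ
        *ᵥ (fun k => vecc N (Fin.cast (by ring : n * ((q * m) * p) = (n * q) * (m * p)) k))
      = fun k => vKron u v
          (Fin.cast (by ring : n * ((m * q) * p) = (n * m) * (q * p)) k)) := by
  constructor
  · rintro ⟨A, B, rfl⟩
    refine ⟨vecc A, vecc B, ?_⟩
    funext k
    rw [lhs_eval]
    simp only [vKron]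
    rw [fdiv_cast, fmod_cast]
    simp [mKron, vecc, fdiv_fpair, fmod_fpair]
  · rintro ⟨u, v, H⟩
    refine ⟨fun i j => u (fpair j i), fun i j => v (fpair j i), ?_⟩
    funext r c
    have Hk := congrFun H (fpair (fdiv c) (fpair (fpair (fdiv r) (fmod c)) (fmod r)))
    rw [lhs_eval] at Hk
    simp only [vKron] at Hk
    rw [fdiv_cast, fmod_cast] at Hk
    simp only [fdiv_fpair, fmod_fpair, fpair_fdiv_fmod] at Hk
    simpa [mKron] using Hk
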